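/- Let n ≥ 2 be an integer. Then: (i) for every integer m ≥ 2 and every real t ≥ 1, m·(t² + t^{2n+1}) < (Σ_{i=0}^{n} t^{2i})^m; and (ii) there exists a real t ≥ 1 such that t² + t^{2n+1} ≥ Σ_{i=0}^{n} t^{2i}. Consequently the stabilization threshold 𝔭𝔭(ℂP^n; 1) equals 2. -/

import Mathlib

lemma aux_key (n : ℕ) (hn : 2 ≤ n) (m : ℕ) (hm : 2 ≤ m) (t : ℝ) (ht : 1 ≤ t) :
    (m : ℝ) * (t ^ 2 + t ^ (2 * n + 1)) <
      (∑ i ∈ Finset.range (n + 1), t ^ (2 * i)) ^ m := by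
  have ht0 : (0:ℝ) < t := lt_of_lt_of_le one_pos ht
  set S : ℝ := ∑ i ∈ Finset.range (n + 1), t ^ (2 * i) with hSdef
  have hsub : ({0, 1, n} : Finset ℕ) ⊆ Finset.range (n + 1) := by
    intro x hx
    simp only [Finset.mem_insert, Finset.mem_singleton] at hx
    rcases hx with h | h | h <;> simp [h] <;> omega
  have hS3 : 1 + t ^ 2 + t ^ (2 * n) ≤ S := by
    have h2 : ∀ i ∈ Finset.range (n+1), i ∉ ({0,1,n} : Finset ℕ) → 0 ≤ t ^ (2*i) :=
      fun i _ _ => by positivity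
    have := Finset.sum_le_sum_of_subset_of_nonneg hsub h2
    calc 1 + t ^ 2 + t ^ (2 * n)
        = ∑ i ∈ ({0, 1, n} : Finset ℕ), t ^ (2 * i) := by
          rw [Finset.sum_insert (by simp; omega), Finset.sum_insert (by simp; omega),
            Finset.sum_singleton]
          ring_nf
      _ ≤ S := this
  have hb1 : (1:ℝ) ≤ t ^ (2 * n) := one_le_pow₀ ht
  have ha1 : (1:ℝ) ≤ t ^ 2 := one_le_pow₀ ht
  -- S² > 2*(t² + t^{2n+1})
  have hc : t ^ (2 * n + 1) = t ^ (2 * n) * t := by rw [pow_succ]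
  have hsq : 2 * (t ^ 2 + t ^ (2 * n + 1)) < S ^ 2 := by
    have h1 : (1 + t ^ 2 + t ^ (2 * n)) ^ 2 ≤ S ^ 2 := by
      have : 0 ≤ 1 + t ^ 2 + t ^ (2 * n) := by positivity
      exact pow_le_pow_left₀ this hS3 2
    nlinarith [sq_nonneg t, sq_nonneg (t ^ (2*n)), mul_le_mul_of_nonneg_left ht (le_of_lt ht0),
      mul_le_mul_of_nonneg_left ha1 (le_of_lt (lt_of_lt_of_le one_pos hb1))]
  -- S ≥ 3
  have hSge3 : (3:ℝ) ≤ S := by nlinarith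
  -- writing m = k + 2
  obtain ⟨k, rfl⟩ : ∃ k, m = k + 2 := ⟨m - 2, by omega⟩
  have h3k : (0:ℝ) < 3 ^ k := by positivity
  have hmk : ((k:ℝ) + 2) ≤ 2 * 3 ^ k := by
    have := one_add_mul_le_pow (by norm_num : (-2:ℝ) ≤ 2) k
    norm_num at this
    nlinarith
  have hSpos : (0:ℝ) < S := by linarith
  have hP : (0:ℝ) < t ^ 2 + t ^ (2 * n + 1) := by positivity
  have h3S : (3:ℝ) ^ k ≤ S ^ k := pow_le_pow_left₀ (by norm_num) hSge3 k
  calc ((k + 2 : ℕ) : ℝ) * (t ^ 2 + t ^ (2 * n + 1))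
      ≤ 2 * 3 ^ k * (t ^ 2 + t ^ (2 * n + 1)) := by
        push_cast
        exact mul_le_mul_of_nonneg_right hmk (le_of_lt hP)
    _ = 3 ^ k * (2 * (t ^ 2 + t ^ (2 * n + 1))) := by ring
    _ < 3 ^ k * S ^ 2 := by exact mul_lt_mul_of_pos_left hsq h3k
    _ ≤ S ^ k * S ^ 2 := mul_le_mul_of_nonneg_right h3S (by positivity)
    _ = S ^ (k + 2) := by rw [← pow_add]

lemma aux_ex (n : ℕ) (hn : 2 ≤ n) :
    ∃ t : ℝ, 1 ≤ t ∧
        (∑ i ∈ Finset.range (n + 1), t ^ (2 * i)) ≤ t ^ 2 + t ^ (2 * n + 1) := by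
  set t : ℝ := (n : ℝ) + 1 with htdef
  have ht : (1:ℝ) ≤ t := by
    have : (0:ℝ) ≤ n := Nat.cast_nonneg n
    linarith
  refine ⟨t, ht, ?_⟩
  have hsum : (∑ i ∈ Finset.range (n + 1), t ^ (2 * i)) ≤ (n + 1 : ℝ) * t ^ (2 * n) := by
    have := Finset.sum_le_card_nsmul (Finset.range (n+1)) (fun i => t ^ (2*i)) (t ^ (2*n))
      (fun i hi => by
        apply pow_le_pow_right₀ ht
        have := Finset.mem_range.mp hi
        omega)
    simpa [Finset.card_range, nsmul_eq_mul] using this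
  have heq : (n + 1 : ℝ) * t ^ (2 * n) = t ^ (2 * n + 1) := by
    rw [pow_succ]; ring
  have h2 : (0:ℝ) ≤ t ^ 2 := by positivity
  linarith [hsum, heq ▸ hsum]

theorem stmt_10 (n : ℕ) (hn : 2 ≤ n) :
    (∀ m : ℕ, 2 ≤ m → ∀ t : ℝ, 1 ≤ t →
        (m : ℝ) * (t ^ 2 + t ^ (2 * n + 1)) <
          (∑ i ∈ Finset.range (n + 1), t ^ (2 * i)) ^ m) ∧
    (∃ t : ℝ, 1 ≤ t ∧
        (∑ i ∈ Finset.range (n + 1), t ^ (2 * i)) ≤ t ^ 2 + t ^ (2 * n + 1)) ∧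
    IsLeast {n₀ : ℕ | 0 < n₀ ∧ ∀ m : ℕ, n₀ ≤ m → ∀ t : ℝ, 1 ≤ t →
        (m : ℝ) * (t ^ 2 + t ^ (2 * n + 1)) <
          (∑ i ∈ Finset.range (n + 1), t ^ (2 * i)) ^ m} 2 := by
  refine ⟨fun m hm t ht => aux_key n hn m hm t ht, aux_ex n hn, ?_, ?_⟩
  · exact ⟨by norm_num, fun m hm t ht => aux_key n hn m hm t ht⟩
  · rintro n₀ ⟨hpos, h⟩
    by_contra hlt
    push_neg at hlt
    interval_cases n₀
    obtain ⟨t, ht, hle⟩ := aux_ex n hn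
    have := h 1 le_rfl t ht
    push_cast at this
    linarith
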